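/- Let n be a positive integer and T an integer. Then T ∈ 𝒮_3(n) if and only if one of the following holds: (I) there exists a positive integer t with n = 3t² and (T = 3t or T = −3t); or (II) 3n − T² > 0 and, writing 3n − T² = D₀·D₁² with positive integers D₀, D₁ and D₀ squarefree, one has: (a) every prime q dividing D₀ with q ∉ {2, 3} satisfies q ≡ 1 (mod 6), and (b) if 3 divides D₀, or if 3 divides both T and n, then 2 divides D₀. -/
import Mathlib


/-- `S m n` is the set of integers `T` such that there exist integers
`x₁,…,x_m` with `x₁+⋯+x_m = T` and `x₁²+⋯+x_m² = n`. -/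
def S (m n : ℕ) : Set ℤ :=
  {T : ℤ | ∃ x : Fin m → ℤ, (∑ i, x i) = T ∧ (∑ i, (x i) ^ 2) = (n : ℤ)}

/-- `sos m` is the set of integers expressible as a sum of `m` squares of integers. -/
def sos (m : ℕ) : Set ℤ :=
  {n : ℤ | ∃ a : Fin m → ℤ, (∑ i, (a i) ^ 2) = n}

/-- The binary quadratic form `aX² + 2hXY + bY²` is a sum of `m` squares of
integral linear forms. -/
def IsSumSqLin (m : ℕ) (a h b : ℤ) : Prop :=
  ∃ α β : Fin m → ℤ,
    (∑ i, (α i) ^ 2) = a ∧ (∑ i, α i * β i) = h ∧ (∑ i, (β i) ^ 2) = b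

/-- `S m n` is full: every `T` with `T ≡ n (mod 2)` and `T² < mn` lies in `S m n`. -/
def Sfull (m n : ℕ) : Prop :=
  ∀ T : ℤ, T % 2 = (n : ℤ) % 2 → T ^ 2 < (m : ℤ) * n → T ∈ S m n


def Loe (M : ℕ) : Prop := ∃ a b : ℤ, a ^ 2 + a * b + b ^ 2 = (M : ℤ)

lemma loe_mul {M K : ℕ} (hM : Loe M) (hK : Loe K) : Loe (M * K) := by
  obtain ⟨a, b, hab⟩ := hM
  obtain ⟨c, d, hcd⟩ := hK
  exact ⟨a * c - b * d, a * d + b * c + b * d, by push_cast; nlinarith [hab, hcd]⟩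

lemma loe_one : Loe 1 := ⟨1, 0, by norm_num⟩
lemma loe_three : Loe 3 := ⟨1, 1, by norm_num⟩
lemma loe_sq (p : ℕ) : Loe (p ^ 2) := ⟨p, 0, by push_cast; ring⟩

lemma no_omega {q : ℕ} (hq : q.Prime) (h3 : q % 3 = 2) : ∀ x : ZMod q, x ^ 2 + x + 1 ≠ 0 := by
  haveI : Fact q.Prime := ⟨hq⟩
  intro x hx
  have hx1 : x ≠ 1 := by
    intro h1; rw [h1] at hx; norm_num at hx
    have h30 : ((3 : ℕ) : ZMod q) = 0 := by exact_mod_cast hx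
    have := (ZMod.natCast_eq_zero_iff 3 q).mp h30
    have := (Nat.prime_dvd_prime_iff_eq hq Nat.prime_three).mp this
    omega
  have hx0 : x ≠ 0 := by intro h0; rw [h0] at hx; norm_num at hx
  have hcube : x ^ 3 = 1 := by linear_combination (x - 1) * hx
  have hdvd3 : orderOf x ∣ 3 := orderOf_dvd_of_pow_eq_one hcube
  have ho : orderOf x = 3 := by
    rcases (Nat.prime_three.eq_one_or_self_of_dvd _ hdvd3) with h | h
    · exact absurd (orderOf_eq_one_iff.mp h) hx1
    · exact h
  set u : (ZMod q)ˣ := Units.mk0 x hx0 with hu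
  have hou : orderOf u = 3 := by
    rw [← ho]
    have h := orderOf_units (y := u)
    simpa [hu] using h.symm
  have hcard : orderOf u ∣ Fintype.card (ZMod q)ˣ := orderOf_dvd_card
  rw [hou, ZMod.card_units_eq_totient, Nat.totient_prime hq] at hcard
  have := hq.two_le
  omega

lemma dvd_of_two_mod_three {q : ℕ} (hq : q.Prime) (h3 : q % 3 = 2) {a b : ℤ}
    (hdvd : (q : ℤ) ∣ a ^ 2 + a * b + b ^ 2) : (q : ℤ) ∣ a ∧ (q : ℤ) ∣ b := by
  haveI : Fact q.Prime := ⟨hq⟩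
  have key := no_omega hq h3
  have hAB : (a : ZMod q) ^ 2 + (a : ZMod q) * (b : ZMod q) + (b : ZMod q) ^ 2 = 0 := by
    have := (ZMod.intCast_zmod_eq_zero_iff_dvd _ q).mpr hdvd
    push_cast at this
    exact this
  have hB : (b : ZMod q) = 0 := by
    by_contra hB
    apply key ((a : ZMod q) * (b : ZMod q)⁻¹)
    have hbi : (b : ZMod q) * (b : ZMod q)⁻¹ = 1 := mul_inv_cancel₀ hB
    linear_combination ((b : ZMod q)⁻¹) ^ 2 * hAB -
      ((a : ZMod q) * (b : ZMod q)⁻¹ + 1 + (b : ZMod q) * (b : ZMod q)⁻¹) * hbi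
  have hA : (a : ZMod q) = 0 := by
    rw [hB] at hAB
    simpa using hAB
  constructor
  · exact (ZMod.intCast_zmod_eq_zero_iff_dvd _ q).mp hA
  · exact (ZMod.intCast_zmod_eq_zero_iff_dvd _ q).mp hB

lemma exists_omega {p : ℕ} (hp : p.Prime) (h1 : p % 3 = 1) :
    ∃ x : ZMod p, x ^ 2 + x + 1 = 0 := by
  haveI : Fact p.Prime := ⟨hp⟩
  have hp2 : 2 ≤ p := hp.two_le
  have hp7 : 7 ≤ p := by
    by_contra h
    push_neg at h
    interval_cases p <;> revert hp h1 <;> decide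
  obtain ⟨g, hg⟩ := IsCyclic.exists_generator (α := (ZMod p)ˣ)
  have horder : orderOf g = p - 1 := by
    have := orderOf_eq_card_of_forall_mem_zpowers hg
    rwa [Nat.card_eq_fintype_card, ZMod.card_units_eq_totient, Nat.totient_prime hp] at this
  have h3dvd : 3 ∣ p - 1 := by omega
  set k := (p - 1) / 3 with hk
  have hk3 : 3 * k = p - 1 := by omega
  set u := g ^ k with hudef
  have hu3 : u ^ 3 = 1 := by
    rw [hudef, ← pow_mul, mul_comm, hk3, ← horder, pow_orderOf_eq_one]
  have hu1 : u ≠ 1 := by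
    intro h
    have := orderOf_dvd_of_pow_eq_one (n := k) (x := g) (by rw [← hudef, h])
    rw [horder] at this
    have hkpos : 0 < k := by omega
    have := Nat.le_of_dvd hkpos this
    omega
  set x : ZMod p := (u : ZMod p) with hx
  have hx3 : x ^ 3 = 1 := by
    rw [hx, ← Units.val_pow_eq_pow_val, hu3, Units.val_one]
  have hx1 : x ≠ 1 := by
    intro h
    apply hu1
    exact Units.ext (by rw [← hx, h, Units.val_one])
  refine ⟨x, ?_⟩
  have : (x - 1) * (x ^ 2 + x + 1) = 0 := by linear_combination hx3
  rcases mul_eq_zero.mp this with h | h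
  · exact absurd (sub_eq_zero.mp h) hx1
  · exact h

lemma thue {p : ℕ} (hp : p.Prime) (u : ZMod p) :
    ∃ a b : ℤ, ¬(a = 0 ∧ b = 0) ∧ a ^ 2 ≤ (Nat.sqrt p : ℤ) ^ 2 ∧ b ^ 2 ≤ (Nat.sqrt p : ℤ) ^ 2 ∧
      (a : ZMod p) = u * (b : ZMod p) := by
  haveI : Fact p.Prime := ⟨hp⟩
  set r := Nat.sqrt p with hr
  have hcard : Fintype.card (ZMod p) < Fintype.card (Fin (r + 1) × Fin (r + 1)) := by
    rw [ZMod.card, Fintype.card_prod, Fintype.card_fin]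
    calc p < (r + 1) * (r + 1) := Nat.lt_succ_sqrt p
    _ = (r + 1) * (r + 1) := rfl
  obtain ⟨⟨i, j⟩, ⟨i', j'⟩, hne, heq⟩ :=
    Fintype.exists_ne_map_eq_of_card_lt
      (fun q : Fin (r + 1) × Fin (r + 1) => ((q.1 : ℤ) : ZMod p) - u * ((q.2 : ℤ) : ZMod p)) hcard
  refine ⟨(i : ℤ) - (i' : ℤ), (j : ℤ) - (j' : ℤ), ?_, ?_, ?_, ?_⟩
  · rintro ⟨ha, hb⟩
    apply hne
    have hi : (i : ℕ) = (i' : ℕ) := by omega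
    have hj : (j : ℕ) = (j' : ℕ) := by omega
    simp [Prod.ext_iff, Fin.ext_iff, hi, hj]
  · have h1 : (i : ℤ) ≤ r := by exact_mod_cast Nat.le_of_lt_succ i.isLt
    have h2 : (i' : ℤ) ≤ r := by exact_mod_cast Nat.le_of_lt_succ i'.isLt
    have h3 : (0 : ℤ) ≤ i := Int.natCast_nonneg _
    have h4 : (0 : ℤ) ≤ i' := Int.natCast_nonneg _
    nlinarith
  · have h1 : (j : ℤ) ≤ r := by exact_mod_cast Nat.le_of_lt_succ j.isLt
    have h2 : (j' : ℤ) ≤ r := by exact_mod_cast Nat.le_of_lt_succ j'.isLt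
    have h3 : (0 : ℤ) ≤ j := Int.natCast_nonneg _
    have h4 : (0 : ℤ) ≤ j' := Int.natCast_nonneg _
    nlinarith
  · have : (((i : ℕ) : ℤ) : ZMod p) - u * (((j : ℕ) : ℤ) : ZMod p)
        = (((i' : ℕ) : ℤ) : ZMod p) - u * (((j' : ℕ) : ℤ) : ZMod p) := heq
    push_cast
    push_cast at this
    linear_combination this

lemma loe_prime {p : ℕ} (hp : p.Prime) (h1 : p % 3 = 1) : Loe p := by
  haveI : Fact p.Prime := ⟨hp⟩
  obtain ⟨u, hu⟩ := exists_omega hp h1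
  obtain ⟨a, b, hab0, ha, hb, hcong⟩ := thue hp u
  set M : ℤ := a ^ 2 + a * b + b ^ 2 with hM
  have hMpos : 0 < M := by
    rcases lt_trichotomy M 0 with h | h | h
    · nlinarith [sq_nonneg (2 * a + b), sq_nonneg b]
    · exfalso; apply hab0
      constructor <;> nlinarith [sq_nonneg (2 * a + b), sq_nonneg b, sq_nonneg (a - b),
        sq_nonneg (a + 2 * b)]
    · exact h
  have hpdvd : (p : ℤ) ∣ M := by
    have : ((M : ℤ) : ZMod p) = 0 := by
      rw [hM]
      push_cast
      rw [hcong]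
      linear_combination ((b : ZMod p)) ^ 2 * hu
    exact (ZMod.intCast_zmod_eq_zero_iff_dvd _ p).mp this
  have hsqn : Nat.sqrt p ^ 2 < p := by
    have hle : Nat.sqrt p ^ 2 ≤ p := Nat.sqrt_le' p
    have hp2' := hp.two_le
    rcases Nat.lt_or_ge (Nat.sqrt p ^ 2) p with h | h
    · exact h
    · exfalso
      have heq : Nat.sqrt p ^ 2 = p := le_antisymm hle h
      have hmm : Nat.sqrt p * Nat.sqrt p = p := by rw [← pow_two]; exact heq
      have hdvd : Nat.sqrt p ∣ p := ⟨Nat.sqrt p, hmm.symm⟩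
      rcases (Nat.Prime.eq_one_or_self_of_dvd hp _ hdvd) with h1' | h1'
      · rw [h1'] at heq; simp at heq; omega
      · rw [h1'] at heq; nlinarith
  have hsq : ((Nat.sqrt p : ℤ)) ^ 2 < (p : ℤ) := by exact_mod_cast hsqn
  have hMlt : M < 3 * (p : ℤ) := by nlinarith [sq_nonneg (a - b), sq_nonneg (a + b)]
  obtain ⟨c, hc⟩ := hpdvd
  have hppos : (0 : ℤ) < p := by exact_mod_cast hp.pos
  have hc_pos : 0 < c := by nlinarith
  have hc_lt : c < 3 := by nlinarith
  interval_cases c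
  · exact ⟨a, b, by rw [← hM, hc]; ring⟩
  · -- M = 2p impossible
    exfalso
    have h2dvd : ((2 : ℕ) : ℤ) ∣ a ^ 2 + a * b + b ^ 2 := by
      push_cast
      exact hM ▸ ⟨(p : ℤ), by rw [hc]; ring⟩
    obtain ⟨h2a, h2b⟩ := dvd_of_two_mod_three Nat.prime_two (by norm_num) h2dvd
    obtain ⟨a', rfl⟩ := h2a
    obtain ⟨b', rfl⟩ := h2b
    have hfour : (4 : ℤ) ∣ M := ⟨a' ^ 2 + a' * b' + b' ^ 2, by rw [hM]; push_cast; ring⟩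
    rw [hc] at hfour
    have : (2 : ℤ) ∣ (p : ℤ) := by omega
    have : (2 : ℕ) ∣ p := by exact_mod_cast this
    have := (Nat.prime_dvd_prime_iff_eq Nat.prime_two hp).mp this
    omega

lemma loe_even_val : ∀ M : ℕ, 0 < M → Loe M →
    ∀ q : ℕ, q.Prime → q % 3 = 2 → Even (M.factorization q) := by
  intro M
  induction M using Nat.strong_induction_on with
  | _ M ih =>
    intro hM ⟨a, b, hab⟩ q hq hq3
    by_cases hdvd : q ∣ M
    · have hqz : (q : ℤ) ∣ a ^ 2 + a * b + b ^ 2 := by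
        rw [hab]; exact_mod_cast Int.natCast_dvd_natCast.mpr hdvd
      obtain ⟨ha2, hb2⟩ := dvd_of_two_mod_three hq hq3 hqz
      obtain ⟨a', rfl⟩ := ha2
      obtain ⟨b', rfl⟩ := hb2
      have hq2dvd : q ^ 2 ∣ M := by
        have : ((q ^ 2 : ℕ) : ℤ) ∣ (M : ℤ) := by
          refine ⟨a' ^ 2 + a' * b' + b' ^ 2, ?_⟩
          rw [← hab]; push_cast; ring
        exact_mod_cast this
      obtain ⟨M₁, hM₁⟩ := hq2dvd
      have hq0 : q ≠ 0 := hq.ne_zero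
      have hM₁pos : 0 < M₁ := by
        rcases Nat.eq_zero_or_pos M₁ with h | h
        · rw [h, mul_zero] at hM₁; omega
        · exact h
      have hlt : M₁ < M := by
        have hq2 : 2 ≤ q := hq.two_le
        have h4 : 4 ≤ q ^ 2 := by nlinarith
        have h5 : 4 * M₁ ≤ q ^ 2 * M₁ := Nat.mul_le_mul_right _ h4
        rw [hM₁]
        exact lt_of_lt_of_le (by omega : M₁ < 4 * M₁) h5
      have hM₁loe : Loe M₁ := by
        refine ⟨a', b', ?_⟩
        have hcast : ((q : ℤ)) ^ 2 * ((M₁ : ℤ)) = ((q : ℤ)) ^ 2 * (a' ^ 2 + a' * b' + b' ^ 2) := by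
          have h1 : ((M : ℕ) : ℤ) = (q : ℤ) ^ 2 * (M₁ : ℤ) := by rw [hM₁]; push_cast; ring
          rw [← h1, ← hab]; ring
        have := mul_left_cancel₀ (pow_ne_zero 2 (by exact_mod_cast hq0 : (q : ℤ) ≠ 0)) hcast
        exact this.symm
      have hfact : M.factorization q = 2 + M₁.factorization q := by
        rw [hM₁, Nat.factorization_mul (pow_ne_zero 2 hq0) hM₁pos.ne',
          hq.factorization_pow]
        simp
      rw [hfact]
      obtain ⟨k, hk⟩ := ih M₁ hlt hM₁pos hM₁loe q hq hq3
      exact ⟨k + 1, by omega⟩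
    · rw [Nat.factorization_eq_zero_of_not_dvd hdvd]
      exact Even.zero

lemma loe_of_even_val : ∀ M : ℕ, 0 < M →
    (∀ q : ℕ, q.Prime → q % 3 = 2 → Even (M.factorization q)) → Loe M := by
  intro M
  induction M using Nat.strong_induction_on with
  | _ M ih =>
    intro hM hval
    rcases Nat.eq_or_lt_of_le hM with h1 | h1
    · rw [← h1]; exact loe_one
    have hM1 : M ≠ 1 := by omega
    have hM0 : M ≠ 0 := by omega
    set p := M.minFac with hp
    have hpp : p.Prime := Nat.minFac_prime hM1
    have hpdvd : p ∣ M := Nat.minFac_dvd M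
    have hp2 : 2 ≤ p := hpp.two_le
    rcases lt_trichotomy (p % 3) 2 with h3 | h3 | h3
    · -- p % 3 = 0 or 1
      have hploe : Loe p := by
        rcases Nat.lt_or_ge (p % 3) 1 with h0 | h0
        · -- p % 3 = 0 → p = 3
          have : (3 : ℕ) ∣ p := by omega
          have : p = 3 := ((Nat.prime_dvd_prime_iff_eq Nat.prime_three hpp).mp this).symm
          rw [this]; exact loe_three
        · exact loe_prime hpp (by omega)
      have hp3 : p % 3 ≠ 2 := by omega
      set M' := M / p with hM'
      have hMeq : M = p * M' := (Nat.mul_div_cancel' hpdvd).symm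
      have hM'0 : 0 < M' := Nat.div_pos (Nat.le_of_dvd hM hpdvd) (by omega)
      have hlt : M' < M := by
        rw [hMeq]
        have := Nat.mul_le_mul_right M' hp2
        omega
      have hval' : ∀ q : ℕ, q.Prime → q % 3 = 2 → Even (M'.factorization q) := by
        intro q hq hq3
        have hqp : q ≠ p := by intro h; rw [h] at hq3; omega
        have := Nat.factorization_div hpdvd
        have hfq : M'.factorization q = M.factorization q - p.factorization q := by
          rw [hM', this]; rfl
        rw [hpp.factorization] at hfq
        rw [hfq, Finsupp.single_apply, if_neg (fun h => hqp h.symm)]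
        simpa using hval q hq hq3
      have := loe_mul hploe (ih M' hlt hM'0 hval')
      rwa [← hMeq] at this
    · -- p % 3 = 2
      have hvp : 1 ≤ M.factorization p := (hpp.factorization_pos_of_dvd hM0 hpdvd)
      obtain ⟨k, hk⟩ := hval p hpp h3
      have hvp2 : 2 ≤ M.factorization p := by omega
      have hp2dvd : p ^ 2 ∣ M := (Nat.Prime.pow_dvd_iff_le_factorization hpp hM0).mpr hvp2
      set M' := M / p ^ 2 with hM'
      have hMeq : M = p ^ 2 * M' := (Nat.mul_div_cancel' hp2dvd).symm
      have hM'0 : 0 < M' := Nat.div_pos (Nat.le_of_dvd hM hp2dvd) (by positivity)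
      have hlt : M' < M := by
        rw [hMeq]
        have h4 : 4 ≤ p ^ 2 := by nlinarith
        have := Nat.mul_le_mul_right M' h4
        omega
      have hval' : ∀ q : ℕ, q.Prime → q % 3 = 2 → Even (M'.factorization q) := by
        intro q hq hq3
        have := Nat.factorization_div hp2dvd
        have hfq : M'.factorization q = M.factorization q - (p ^ 2).factorization q := by
          rw [hM', this]; rfl
        rw [hpp.factorization_pow] at hfq
        rw [hfq, Finsupp.single_apply]
        by_cases hqp : q = p
        · rw [if_pos hqp.symm]
          obtain ⟨j, hj⟩ := hval q hq hq3
          refine ⟨j - 1, ?_⟩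
          rw [hqp] at hj ⊢
          omega
        · rw [if_neg (fun h => hqp h.symm)]
          simpa using hval q hq hq3
      have := loe_mul (loe_sq p) (ih M' hlt hM'0 hval')
      rwa [← hMeq] at this
    · omega

lemma all_one_mod_three : ∀ m : ℕ, 0 < m → (∀ p : ℕ, p.Prime → p ∣ m → p % 3 = 1) → m % 3 = 1 := by
  intro m
  induction m using Nat.strong_induction_on with
  | _ m ih =>
    intro hm hall
    rcases Nat.eq_or_lt_of_le hm with h1 | h1
    · omega
    have hm1 : m ≠ 1 := by omega
    set p := m.minFac with hp
    have hpp : p.Prime := Nat.minFac_prime hm1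
    have hpdvd : p ∣ m := Nat.minFac_dvd m
    have hp1 : p % 3 = 1 := hall p hpp hpdvd
    set m' := m / p with hm'
    have hmeq : m = p * m' := (Nat.mul_div_cancel' hpdvd).symm
    have hm'0 : 0 < m' := Nat.div_pos (Nat.le_of_dvd (by omega) hpdvd) hpp.pos
    have hlt : m' < m := by
      rw [hmeq]
      have := Nat.mul_le_mul_right m' hpp.two_le
      omega
    have hm'1 : m' % 3 = 1 := by
      apply ih m' hlt hm'0
      intro q hq hqd
      exact hall q hq (hqd.trans ⟨p, by rw [hmeq]; ring⟩)
    rw [hmeq, Nat.mul_mod, hp1, hm'1]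

lemma mem_S3_iff (n : ℕ) (T : ℤ) :
    T ∈ S 3 n ↔ ∃ a b : ℤ, 2 * (a ^ 2 + a * b + b ^ 2) = 3 * (n : ℤ) - T ^ 2 ∧
      (3 : ℤ) ∣ (T + 2 * a + b) := by
  constructor
  · rintro ⟨x, hsum, hsq⟩
    rw [Fin.sum_univ_three] at hsum hsq
    exact ⟨x 0 - x 1, x 1 - x 2,
      by linear_combination 3 * hsq - (T + x 0 + x 1 + x 2) * hsum,
      ⟨x 0, by linarith [hsum]⟩⟩
  · rintro ⟨a, b, h2, ⟨c, hc⟩⟩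
    refine ⟨![c, c - a, c - a - b], ?_, ?_⟩
    · rw [Fin.sum_univ_three]
      simp only [Matrix.cons_val_zero, Matrix.cons_val_one, Matrix.head_cons,
        Matrix.cons_val_two, Matrix.tail_cons]
      linarith [hc]
    · rw [Fin.sum_univ_three]
      simp only [Matrix.cons_val_zero, Matrix.cons_val_one, Matrix.head_cons,
        Matrix.cons_val_two, Matrix.tail_cons]
      have h3 : 3 * (c ^ 2 + (c - a) ^ 2 + (c - a - b) ^ 2) = 3 * (n : ℤ) := by
        linear_combination h2 - (3 * c - 2 * a - b + T) * hc
      linarith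

theorem stmt9 (n : ℕ) (hn : 0 < n) (T : ℤ) :
    T ∈ S 3 n ↔
      ((∃ t : ℕ, 0 < t ∧ n = 3 * t ^ 2 ∧ (T = 3 * (t : ℤ) ∨ T = -(3 * (t : ℤ)))) ∨
       (0 < 3 * (n : ℤ) - T ^ 2 ∧
        ∀ D₀ D₁ : ℕ, 0 < D₀ → 0 < D₁ → Squarefree D₀ →
          3 * (n : ℤ) - T ^ 2 = (D₀ : ℤ) * (D₁ : ℤ) ^ 2 →
          ((∀ q : ℕ, q.Prime → q ∣ D₀ → q ≠ 2 → q ≠ 3 → q % 6 = 1) ∧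
           ((3 ∣ D₀ ∨ ((3 : ℤ) ∣ T ∧ (3 : ℤ) ∣ (n : ℤ))) → 2 ∣ D₀)))) := by
  rw [mem_S3_iff]
  constructor
  · rintro ⟨a, b, h2, hdvd3⟩
    have hN0 : 0 ≤ 3 * (n : ℤ) - T ^ 2 := by nlinarith [sq_nonneg (2 * a + b), sq_nonneg b]
    rcases eq_or_lt_of_le hN0 with hNz | hNpos
    · -- N = 0 : case I
      left
      have h20 : 2 * (a ^ 2 + a * b + b ^ 2) = 0 := by rw [h2, ← hNz]
      have h4 : (2 * a + b) ^ 2 + 3 * b ^ 2 = 0 := by linear_combination 2 * h20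
      have hb2 : b ^ 2 = 0 := by nlinarith [sq_nonneg (2 * a + b)]
      have hb : b = 0 := by
        have := sq_eq_zero_iff.mp hb2
        exact this
      have ha : a = 0 := by
        rw [hb] at h4
        have : (2 * a) ^ 2 = 0 := by linarith
        have := sq_eq_zero_iff.mp this
        linarith
      rw [ha, hb] at hdvd3
      obtain ⟨s, hs⟩ := (by simpa using hdvd3 : (3 : ℤ) ∣ T)
      have hT2 : T ^ 2 = 3 * (n : ℤ) := by linarith
      have hns : (n : ℤ) = 3 * s ^ 2 := by
        have h9 : 9 * s ^ 2 = 3 * (n : ℤ) := by rw [← hT2, hs]; ring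
        linarith
      have hs0 : s ≠ 0 := by
        intro h
        rw [h] at hns
        simp at hns
        omega
      refine ⟨s.natAbs, by positivity, ?_, ?_⟩
      · have : (n : ℤ) = 3 * ((s.natAbs : ℤ)) ^ 2 := by rw [Int.natAbs_sq]; exact hns
        exact_mod_cast this
      · omega
    · -- N > 0 : case II
      right
      refine ⟨hNpos, ?_⟩
      intro D₀ D₁ hD₀ hD₁ hsf heq
      -- setup
      set M' : ℤ := a ^ 2 + a * b + b ^ 2 with hM'
      have hM'0 : 0 ≤ M' := by nlinarith [sq_nonneg (2 * a + b), sq_nonneg b]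
      set Mn : ℕ := M'.toNat with hMndef
      have hMn : (Mn : ℤ) = M' := Int.toNat_of_nonneg hM'0
      have hMnpos : 0 < Mn := by
        rcases Nat.eq_zero_or_pos Mn with h | h
        · exfalso; rw [h] at hMn; rw [← hMn] at h2; simp at h2; omega
        · exact h
      have hMnloe : Loe Mn := ⟨a, b, by rw [hMn]⟩
      have hEV := loe_even_val Mn hMnpos hMnloe
      -- N as nat equation : D₀ * D₁^2 = 2 * Mn
      have hNat : D₀ * D₁ ^ 2 = 2 * Mn := by
        have : ((D₀ * D₁ ^ 2 : ℕ) : ℤ) = ((2 * Mn : ℕ) : ℤ) := by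
          push_cast
          rw [hMn, ← heq, ← h2]
        exact_mod_cast this
      have hvq : ∀ q : ℕ, (D₀ * D₁ ^ 2).factorization q
          = D₀.factorization q + 2 * D₁.factorization q := by
        intro q
        rw [Nat.factorization_mul hD₀.ne' (pow_ne_zero _ hD₁.ne'), Nat.factorization_pow]
        simp [mul_comm]
      have hvq2 : ∀ q : ℕ, (2 * Mn).factorization q
          = (Nat.factorization 2) q + Mn.factorization q := by
        intro q
        rw [Nat.factorization_mul (by norm_num) hMnpos.ne']
        simp
      constructor
      · intro q hq hqD hq2 hq3
        have hq3m : q % 3 ≠ 0 := by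
          intro h
          exact hq3 ((Nat.prime_dvd_prime_iff_eq Nat.prime_three hq).mp (by omega)).symm
        have hq2m : q % 2 = 1 := by
          have := hq.two_le
          rcases Nat.mod_two_eq_zero_or_one q with h | h
          · exfalso; exact hq2 ((Nat.prime_dvd_prime_iff_eq Nat.prime_two hq).mp (by omega)).symm
          · exact h
        rcases (by omega : q % 3 = 1 ∨ q % 3 = 2) with h | h
        · omega
        · -- contradiction : parity of valuation
          exfalso
          obtain ⟨k, hk⟩ := hEV q hq h
          have hfD : D₀.factorization q = 1 := by
            have hle := Squarefree.natFactorization_le_one q hsf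
            have hge := (Nat.Prime.dvd_iff_one_le_factorization hq hD₀.ne').mp hqD
            omega
          have h2f : (Nat.factorization 2) q = 0 := by
            rw [Nat.Prime.factorization Nat.prime_two]
            simp [Finsupp.single_apply]
            intro h'; exact hq2 h'.symm
          have := hvq q
          rw [hNat, hvq2 q, hfD, h2f] at this
          omega
      · intro _
        -- show 2 ∣ D₀ always
        obtain ⟨k, hk⟩ := hEV 2 Nat.prime_two (by norm_num)
        have h2f : (Nat.factorization 2) 2 = 1 := by
          rw [Nat.Prime.factorization Nat.prime_two]
          simp
        have := hvq 2
        rw [hNat, hvq2 2, h2f] at this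
        have hvD : 1 ≤ D₀.factorization 2 := by omega
        exact (Nat.Prime.dvd_iff_one_le_factorization Nat.prime_two hD₀.ne').mpr hvD
  · rintro (⟨t, ht, hn3, hT⟩ | ⟨hNpos, hall⟩)
    · -- case I
      refine ⟨0, 0, ?_, ?_⟩
      · have : (n : ℤ) = 3 * (t : ℤ) ^ 2 := by exact_mod_cast hn3
        rcases hT with h | h <;> rw [h, this] <;> ring
      · rcases hT with h | h
        · exact ⟨(t : ℤ), by rw [h]; ring⟩
        · exact ⟨-(t : ℤ), by rw [h]; ring⟩
    · -- case II
      have hNnn : (0:ℤ) ≤ 3 * (n:ℤ) - T ^ 2 := le_of_lt hNpos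
      set Nn : ℕ := (3 * (n:ℤ) - T ^ 2).toNat with hNndef
      have hNn : (Nn : ℤ) = 3 * (n:ℤ) - T ^ 2 := Int.toNat_of_nonneg hNnn
      have hNnpos : 0 < Nn := by
        have : (0:ℤ) < (Nn:ℤ) := by rw [hNn]; exact hNpos
        exact_mod_cast this
      obtain ⟨D₀, D₁, hfac, hsf⟩ := Nat.sq_mul_squarefree Nn
      have hD₀ : 0 < D₀ := Nat.pos_of_ne_zero (by rintro rfl; exact not_squarefree_zero hsf)
      have hD₁ : 0 < D₁ := by
        rcases Nat.eq_zero_or_pos D₁ with h | h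
        · exfalso; rw [h] at hfac; simp at hfac; omega
        · exact h
      have hfac' : D₀ * D₁ ^ 2 = Nn := by rw [← hfac]; ring
      have heqZ : 3 * (n:ℤ) - T ^ 2 = (D₀:ℤ) * (D₁:ℤ) ^ 2 := by
        rw [← hNn]
        exact_mod_cast hfac'.symm
      obtain ⟨hA, hB⟩ := hall D₀ D₁ hD₀ hD₁ hsf heqZ
      have hNnfac : Nn = D₀ * D₁ ^ 2 := hfac'.symm
      have hvq : ∀ q : ℕ, Nn.factorization q
          = D₀.factorization q + 2 * D₁.factorization q := by
        intro q
        rw [hNnfac, Nat.factorization_mul hD₀.ne' (pow_ne_zero _ hD₁.ne'),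
          Nat.factorization_pow]
        simp [mul_comm]
      have h2D : 2 ∣ D₀ := by
        by_cases hc : 3 ∣ D₀ ∨ ((3:ℤ) ∣ T ∧ (3:ℤ) ∣ (n:ℤ))
        · exact hB hc
        · push_neg at hc
          obtain ⟨h3D, hTn⟩ := hc
          by_cases hT3 : (3:ℤ) ∣ T
          · exfalso
            have hn3 : ¬ (3:ℤ) ∣ (n:ℤ) := hTn hT3
            obtain ⟨u, hu⟩ := hT3
            have h3Nn : 3 ∣ Nn := by
              have : (3:ℤ) ∣ (Nn:ℤ) := ⟨(n:ℤ) - 3 * u ^ 2, by rw [hNn, hu]; ring⟩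
              exact_mod_cast this
            have h9Nn : ¬ (9 : ℕ) ∣ Nn := by
              intro h9
              apply hn3
              obtain ⟨v, hv⟩ := h9
              have hvz : (Nn:ℤ) = 9 * (v:ℤ) := by exact_mod_cast hv
              have h3n : 3 * (n:ℤ) = 9 * (v:ℤ) + 9 * u ^ 2 := by
                rw [← hvz, hNn, hu]; ring
              exact ⟨(v:ℤ) + u ^ 2, by linarith⟩
            rw [hNnfac] at h3Nn h9Nn
            rcases (Nat.Prime.dvd_mul Nat.prime_three).mp h3Nn with h | h
            · exact h3D h
            · have h3D₁ : 3 ∣ D₁ := Nat.Prime.dvd_of_dvd_pow Nat.prime_three h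
              obtain ⟨w, hw⟩ := h3D₁
              exact h9Nn ⟨D₀ * w ^ 2, by rw [hw]; ring⟩
          · by_contra h2Dn
            have hq1 : ∀ p : ℕ, p.Prime → p ∣ D₀ → p % 3 = 1 := by
              intro p hp hpd
              have hp2 : p ≠ 2 := by rintro rfl; exact h2Dn hpd
              have hp3 : p ≠ 3 := by rintro rfl; exact h3D hpd
              have := hA p hp hpd hp2 hp3
              omega
            have hD₀m : D₀ % 3 = 1 := all_one_mod_three D₀ hD₀ hq1
            have hT2m : T ^ 2 % 3 = 1 := by
              obtain ⟨k, r, hk, hr⟩ : ∃ k r : ℤ, T = 3 * k + r ∧ (r = 1 ∨ r = 2) :=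
                ⟨T / 3, T % 3, by omega, by omega⟩
              have hsq : T ^ 2 = 3 * (3 * k ^ 2 + 2 * k * r) + r ^ 2 := by rw [hk]; ring
              rcases hr with h | h <;> rw [h] at hsq <;> norm_num at hsq <;> omega
            have hNm : Nn % 3 = 2 := by omega
            have hD₁m : D₁ % 3 = 1 ∨ D₁ % 3 = 2 := by
              rcases (by omega : D₁ % 3 = 0 ∨ D₁ % 3 = 1 ∨ D₁ % 3 = 2) with h | h | h
              · exfalso
                have h3D₁ : 3 ∣ D₁ := by omega
                obtain ⟨w, hw⟩ := h3D₁
                have : 3 ∣ Nn := ⟨D₀ * (3 * w ^ 2), by rw [hNnfac, hw]; ring⟩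
                omega
              · exact Or.inl h
              · exact Or.inr h
            have hmod : Nn % 3 = D₀ % 3 * (D₁ % 3 * (D₁ % 3) % 3) % 3 := by
              rw [hNnfac, pow_two, Nat.mul_mod, Nat.mul_mod D₁ D₁]
            rcases hD₁m with h | h <;> rw [h, hD₀m] at hmod <;> omega
      have h2Nn : 2 ∣ Nn := hNnfac ▸ Dvd.dvd.mul_right h2D _
      obtain ⟨Mn, hMn⟩ := h2Nn
      have hMnpos : 0 < Mn := by omega
      have hv2D : D₀.factorization 2 = 1 := by
        have hle := Squarefree.natFactorization_le_one 2 hsf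
        have hge := (Nat.Prime.dvd_iff_one_le_factorization Nat.prime_two hD₀.ne').mp h2D
        omega
      have heven : ∀ q : ℕ, q.Prime → q % 3 = 2 → Even (Mn.factorization q) := by
        intro q hq hq3
        have hvNn := hvq q
        have hvNn2 : Nn.factorization q = (Nat.factorization 2) q + Mn.factorization q := by
          rw [hMn, Nat.factorization_mul (by norm_num) hMnpos.ne']
          simp
        by_cases hq2 : q = 2
        · subst hq2
          have h2f : (Nat.factorization 2) 2 = 1 := by
            rw [Nat.Prime.factorization Nat.prime_two]; simp
          rw [hv2D] at hvNn
          exact ⟨D₁.factorization 2, by omega⟩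
        · have h2f : (Nat.factorization 2) q = 0 := by
            rw [Nat.Prime.factorization Nat.prime_two]
            simp [Finsupp.single_apply]
            intro h'; exact hq2 h'.symm
          have hqD : ¬ q ∣ D₀ := by
            intro hqd
            have hq3' : q ≠ 3 := by rintro rfl; omega
            have := hA q hq hqd hq2 hq3'
            omega
          rw [Nat.factorization_eq_zero_of_not_dvd hqD] at hvNn
          exact ⟨D₁.factorization q, by omega⟩
      obtain ⟨a, b, hab⟩ := loe_of_even_val Mn hMnpos heven
      have h2ab : 2 * (a ^ 2 + a * b + b ^ 2) = 3 * (n:ℤ) - T ^ 2 := by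
        have hcast : (Nn : ℤ) = 2 * (Mn : ℤ) := by exact_mod_cast hMn
        rw [hab, ← hcast, hNn]
      have hkey : (3:ℤ) ∣ (T + 2 * a + b) * (T + 2 * b + a) :=
        ⟨T * (a + b) + a * b + (n:ℤ), by linear_combination h2ab⟩
      rcases (Int.prime_three).dvd_or_dvd hkey with hd | hd
      · exact ⟨a, b, h2ab, hd⟩
      · exact ⟨b, a, by linear_combination h2ab, hd⟩
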